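/- Consider the generalized eigenvalue problem for the 2×2 block matrix [[A, −Bᵀ],[−B, −εM − ρwwᵀ]] with respect to the block diagonal matrix diag(A, Ŝ), where Ŝ = ρwwᵀ + M. If λ ≠ 1 is an eigenvalue with eigenvector (u, z), then z ≠ 0 and λ satisfies the quadratic equation λ² (zᵀ Ŝ z) − λ(1−ε)(zᵀ M z) − zᵀ S z = 0, where S = εM + ρwwᵀ + B A⁻¹ Bᵀ. -/

import Mathlib

open Matrix

theorem generalized_eigenvalue_quadratic {n N : ℕ}
    (A : Matrix (Fin n) (Fin n) ℝ) (M : Matrix (Fin N) (Fin N) ℝ)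
    (B : Matrix (Fin N) (Fin n) ℝ) (w : Fin N → ℝ) (ε ρ lam : ℝ)
    (u : Fin n → ℝ) (z : Fin N → ℝ)
    (hA : A.PosDef) (hM : M.PosDef) (hw : w ⬝ᵥ w = 1)
    (hε₀ : 0 < ε) (hε₁ : ε < 1) (hρ : 0 < ρ)
    (hlam : lam ≠ 1)
    (hvec : ¬(u = 0 ∧ z = 0))
    (heq1 : A.mulVec u - Bᵀ.mulVec z = lam • A.mulVec u)
    (heq2 : -(B.mulVec u) - (ε • M + ρ • vecMulVec w w).mulVec z
              = lam • (ρ • vecMulVec w w + M).mulVec z) :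
    z ≠ 0 ∧
    lam ^ 2 * (z ⬝ᵥ (ρ • vecMulVec w w + M).mulVec z)
      - lam * (1 - ε) * (z ⬝ᵥ M.mulVec z)
      - z ⬝ᵥ (ε • M + ρ • vecMulVec w w + B * A⁻¹ * Bᵀ).mulVec z = 0 := by
  have hlam' : (1 : ℝ) - lam ≠ 0 := sub_ne_zero.mpr (fun h => hlam h.symm)
  -- from heq1 : Bᵀ z = (1 - lam) • A u
  have hB : Bᵀ.mulVec z = (1 - lam) • A.mulVec u := by
    linear_combination (norm := module) -heq1
  -- z ≠ 0
  have hz : z ≠ 0 := by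
    intro hz0
    apply hvec
    refine ⟨?_, hz0⟩
    have h0 : Bᵀ.mulVec z = 0 := by simp [hz0]
    have hAu : A.mulVec u = 0 := by
      have := hB
      rw [h0] at this
      have := this.symm
      rcases smul_eq_zero.mp this with h | h
      · exact absurd h hlam'
      · exact h
    by_contra hu
    have := (posDef_iff_dotProduct_mulVec.mp hA).2 hu
    rw [hAu] at this
    simp at this
  refine ⟨hz, ?_⟩
  -- A⁻¹ * A = 1
  have hdet : IsUnit A.det := isUnit_iff_ne_zero.mpr (ne_of_gt hA.det_pos)
  have hinv : A⁻¹ * A = 1 := nonsing_inv_mul A hdet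
  -- F1 : zᵀ B A⁻¹ Bᵀ z = (1 - lam) * zᵀ B u
  have F1 : z ⬝ᵥ (B * A⁻¹ * Bᵀ).mulVec z = (1 - lam) * (z ⬝ᵥ B.mulVec u) := by
    have : (B * A⁻¹ * Bᵀ).mulVec z = (1 - lam) • B.mulVec u := by
      rw [← mulVec_mulVec, hB, mulVec_smul, mulVec_mulVec, Matrix.mul_assoc,
        hinv, Matrix.mul_one]
    rw [this, dotProduct_smul, smul_eq_mul]
  -- F2 : scalar form of heq2
  have F2 : -(z ⬝ᵥ B.mulVec u) - (ε * (z ⬝ᵥ M.mulVec z) + z ⬝ᵥ (ρ • vecMulVec w w).mulVec z)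
      = lam * (z ⬝ᵥ (ρ • vecMulVec w w).mulVec z + z ⬝ᵥ M.mulVec z) := by
    have := congrArg (fun v => z ⬝ᵥ v) heq2
    simpa [dotProduct_sub, dotProduct_neg, dotProduct_add, add_mulVec,
      smul_mulVec, dotProduct_smul, smul_eq_mul, mul_add] using this
  have expand : z ⬝ᵥ (ε • M + ρ • vecMulVec w w + B * A⁻¹ * Bᵀ).mulVec z
      = ε * (z ⬝ᵥ M.mulVec z) + z ⬝ᵥ (ρ • vecMulVec w w).mulVec z
        + z ⬝ᵥ (B * A⁻¹ * Bᵀ).mulVec z := by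
    simp [add_mulVec, dotProduct_add, smul_mulVec, dotProduct_smul, smul_eq_mul]
  have expand2 : z ⬝ᵥ (ρ • vecMulVec w w + M).mulVec z
      = z ⬝ᵥ (ρ • vecMulVec w w).mulVec z + z ⬝ᵥ M.mulVec z := by
    simp [add_mulVec, dotProduct_add]
  rw [expand, expand2]
  linear_combination -F1 + (1 - lam) * F2
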